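/- arXiv:2403.01728 — 4 statements merged into one kernel-verified Lean document; each statement's English description precedes it below -/
import Mathlib

section
/- Suppose U is a subspace of U(Vec ℝ) that is invariant under the adjoint actions of e₋₁ and e₀ (i.e., [e₋₁, U] ⊆ U and [e₀, U] ⊆ U), and that, with this adjoint 𝔟-action, U is isomorphic as a 𝔟-module to the tensor density module ℱ_n for some integer n > 0. Then π_λ(U) = 0 for every λ ∈ ℂ. -/
open Polynomial

attribute [local instance 100] LieRing.ofAssociativeRing

noncomputable section

abbrev VecR : Type := Derivation ℂ (Polynomial ℂ) (Polynomial ℂ)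

def eVF (n : ℤ) : VecR := Polynomial.mkDerivation ℂ (X ^ (n + 1).toNat)

lemma vecR_apply (D : VecR) (f : Polynomial ℂ) :
    D f = derivative f * D X := by
  have h : D = Polynomial.mkDerivation ℂ (D X) :=
    Polynomial.derivation_ext (by rw [Polynomial.mkDerivation_X])
  conv_lhs => rw [h]
  rw [Polynomial.mkDerivation_apply]
  simp [smul_eq_mul, mul_comm]

def piL (lam : ℂ) : VecR →ₗ⁅ℂ⁆ Module.End ℂ (Polynomial ℂ) where
  toFun D := D.toLinearMap + lam • (LinearMap.mulLeft ℂ (derivative (D X)))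
  map_add' D1 D2 := by
    refine LinearMap.ext fun g => ?_
    simp only [LinearMap.add_apply, LinearMap.smul_apply, LinearMap.mulLeft_apply,
      Derivation.coeFn_coe, Derivation.add_apply, map_add, smul_eq_C_mul]
    ring
  map_smul' c D := by
    refine LinearMap.ext fun g => ?_
    simp only [RingHom.id_apply, LinearMap.add_apply, LinearMap.smul_apply,
      LinearMap.mulLeft_apply, Derivation.coeFn_coe, Derivation.smul_apply,
      map_smul, smul_eq_C_mul, derivative_C_mul]
    ring
  map_lie' {D1 D2} := by
    refine LinearMap.ext fun g => ?_
    simp only [LieHom.lie_apply, Ring.lie_def, Module.End.mul_apply,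
      LinearMap.add_apply, LinearMap.sub_apply, LinearMap.smul_apply,
      Derivation.coeFn_coe, LinearMap.mulLeft_apply,
      Derivation.commutator_apply, Derivation.map_add, Derivation.map_smul]
    rw [vecR_apply D1 (D2 g), vecR_apply D2 (D1 g),
      vecR_apply D1 (derivative (D2 X) * g), vecR_apply D2 (derivative (D1 X) * g),
      vecR_apply D1 (D2 X), vecR_apply D2 (D1 X),
      vecR_apply D1 g, vecR_apply D2 g]
    simp only [derivative_sub, derivative_add, derivative_neg, derivative_mul, smul_eq_C_mul]
    ring

end
noncomputable section

/-- The universal enveloping algebra of `Vec ℝ`. -/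
abbrev UVec : Type := UniversalEnvelopingAlgebra ℂ VecR

/-- The image of `e n` in the universal enveloping algebra. -/
def eU (n : ℤ) : UVec := UniversalEnvelopingAlgebra.ι ℂ (eVF n)

/-- The extension of `π_λ` to an algebra homomorphism on `U(Vec ℝ)`. -/
def piU (lam : ℂ) : UVec →ₐ[ℂ] Module.End ℂ (Polynomial ℂ) :=
  UniversalEnvelopingAlgebra.lift ℂ (piL lam)

/-- The annihilator of the tensor density module `ℱ_λ`. -/
def AnnF (lam : ℂ) : Submodule ℂ UVec := LinearMap.ker (piU lam).toLinearMap

end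

lemma eVF_neg_one_X : eVF (-1) X = 1 := by
  simp [eVF, Polynomial.mkDerivation_X]

lemma eVF_zero_X : eVF 0 X = X := by
  have : ((0:ℤ) + 1).toNat = 1 := rfl
  simp [eVF, this, Polynomial.mkDerivation_X]

lemma piL_em1 (lam : ℂ) (g : Polynomial ℂ) : piL lam (eVF (-1)) g = derivative g := by
  show (eVF (-1)) g + lam • (derivative ((eVF (-1)) X) * g) = _
  rw [vecR_apply, eVF_neg_one_X]
  simp

lemma piL_e0 (lam : ℂ) (g : Polynomial ℂ) :
    piL lam (eVF 0) g = X * derivative g + lam • g := by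
  show (eVF 0) g + lam • (derivative ((eVF 0) X) * g) = _
  rw [vecR_apply, eVF_zero_X]
  simp [mul_comm]

lemma piU_eU (lam : ℂ) (m : ℤ) : piU lam (eU m) = piL lam (eVF m) := by
  simp [piU, eU, UniversalEnvelopingAlgebra.lift_ι_apply]


lemma X_mul_derivative_X_pow (k : ℕ) :
    X * derivative (X ^ k : Polynomial ℂ) = (k : ℂ) • X ^ k := by
  rcases k with _ | k
  · simp
  · rw [derivative_X_pow]
    simp only [Nat.cast_add, Nat.cast_one, Nat.add_sub_cancel, smul_eq_C_mul]
    ring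

lemma opzero (lam m : ℂ) (hm : ∀ k : ℕ, m + k ≠ 0)
    (T : Module.End ℂ (Polynomial ℂ))
    (h1 : ∀ g, derivative (T g) = T (derivative g))
    (h0 : ∀ g, (X * derivative (T g) + lam • T g) - T (X * derivative g + lam • g)
        = m • T g) :
    T = 0 := by
  have hpow : ∀ k : ℕ, T (X ^ k) = 0 := by
    intro k
    induction k using Nat.strong_induction_on with
    | _ k IH =>
      have hder : derivative (T (X ^ k)) = 0 := by
        rw [h1, derivative_X_pow]
        rcases k with _ | k
        · simp
        · have : (C ((k:ℂ)+1) * X ^ (k + 1 - 1) : Polynomial ℂ)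
              = ((k:ℂ)+1) • X ^ k := by
            simp [smul_eq_C_mul]
          rw [Nat.cast_add, Nat.cast_one, this, map_smul, IH k (Nat.lt_succ_self k),
            smul_zero]
      have hc : T (X ^ k) = C ((T (X ^ k)).coeff 0) :=
        eq_C_of_natDegree_eq_zero (natDegree_eq_zero_of_derivative_eq_zero hder)
      set c := (T (X ^ k)).coeff 0 with hcdef
      have h := h0 (X ^ k)
      rw [hder, X_mul_derivative_X_pow] at h
      rw [map_add, map_smul, map_smul] at h
      have h' : lam • T (X ^ k) - ((k : ℂ) • T (X ^ k) + lam • T (X ^ k))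
          = m • T (X ^ k) := by
        rw [← h]; ring_nf
      have h'' : (m + (k : ℂ)) • T (X ^ k) = 0 := by
        have := h'
        rw [add_smul]
        linear_combination (norm := module) -this
      rcases smul_eq_zero.mp h'' with h3 | h3
      · exact absurd h3 (hm k)
      · exact h3
  refine LinearMap.ext fun p => ?_
  induction p using Polynomial.induction_on' with
  | add p q hp hq => simp only [map_add, LinearMap.zero_apply] at *; rw [hp, hq, add_zero]
  | monomial n a =>
      show T (monomial n a) = 0
      have hm' : (monomial n a : Polynomial ℂ) = a • X ^ n := by
        rw [smul_eq_C_mul, C_mul_X_pow_eq_monomial]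
      rw [hm', map_smul, hpow, smul_zero]

set_option maxHeartbeats 1000000 in
/-- If `U ⊆ U(Vec ℝ)` is a subspace invariant under the adjoint actions of
`e₋₁` and `e₀`, and with this adjoint `𝔟`-action `U` is isomorphic as a
`𝔟`-module to `ℱ_n` for some integer `n > 0`, then `π_λ(U) = 0` for every `λ`. -/
theorem b_module_F_n_annihilated (n : ℤ) (hn : 0 < n) (U : Submodule ℂ UVec)
    (hinv1 : ∀ u ∈ U, eU (-1) * u - u * eU (-1) ∈ U)
    (hinv0 : ∀ u ∈ U, eU 0 * u - u * eU 0 ∈ U)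
    (Φ : U ≃ₗ[ℂ] Polynomial ℂ)
    (heq1 : ∀ (u : UVec) (hu : u ∈ U),
      Φ ⟨eU (-1) * u - u * eU (-1), hinv1 u hu⟩ = piL (n : ℂ) (eVF (-1)) (Φ ⟨u, hu⟩))
    (heq0 : ∀ (u : UVec) (hu : u ∈ U),
      Φ ⟨eU 0 * u - u * eU 0, hinv0 u hu⟩ = piL (n : ℂ) (eVF 0) (Φ ⟨u, hu⟩)) :
    ∀ lam : ℂ, ∀ u ∈ U, piU lam u = 0 := by
  intro lam
  set A : Polynomial ℂ → UVec := fun p => ((Φ.symm p : U) : UVec) with hAdef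
  have hmem : ∀ p, A p ∈ U := fun p => (Φ.symm p).2
  have hΦA : ∀ p, Φ ⟨A p, hmem p⟩ = p := by
    intro p
    have : (⟨A p, hmem p⟩ : U) = Φ.symm p := rfl
    rw [this, Φ.apply_symm_apply]
  have hcoe : ∀ (p : Polynomial ℂ) (x : UVec) (hx : x ∈ U),
      Φ ⟨x, hx⟩ = p → x = A p := by
    intro p x hx h
    have : (⟨x, hx⟩ : U) = Φ.symm p := by
      apply Φ.injective; rw [h, Φ.apply_symm_apply]
    exact congrArg Subtype.val this
  have key1 : ∀ p : Polynomial ℂ, eU (-1) * A p - A p * eU (-1) = A (derivative p) := by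
    intro p
    have h := heq1 (A p) (hmem p)
    rw [hΦA, piL_em1] at h
    exact hcoe _ _ _ h
  have key0 : ∀ p : Polynomial ℂ,
      eU 0 * A p - A p * eU 0 = A (X * derivative p + (n : ℂ) • p) := by
    intro p
    have h := heq0 (A p) (hmem p)
    rw [hΦA, piL_e0] at h
    exact hcoe _ _ _ h
  have hAadd : ∀ p q, A (p + q) = A p + A q := by
    intro p q; simp only [hAdef, Φ.symm.map_add, Submodule.coe_add]
  have hAsmul : ∀ (c : ℂ) p, A (c • p) = c • A p := by
    intro c p; simp only [hAdef, Φ.symm.map_smul, Submodule.coe_smul]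
  have hA0 : A 0 = 0 := by simp only [hAdef, Φ.symm.map_zero, ZeroMemClass.coe_zero]
  have key : ∀ d : ℕ, ∀ p : Polynomial ℂ, p.natDegree = d → piU lam (A p) = 0 := by
    intro d
    induction d using Nat.strong_induction_on with
    | _ d IH =>
      intro p hd
      by_cases hp : p = 0
      · rw [hp, hA0, map_zero]
      have hder : piU lam (A (derivative p)) = 0 := by
        by_cases h0 : d = 0
        · have hdz : derivative p = 0 := by
            have := eq_C_of_natDegree_eq_zero (h0 ▸ hd)
            rw [this, derivative_C]
          rw [hdz, hA0, map_zero]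
        · exact IH _ (hd ▸ natDegree_derivative_lt (by omega)) _ rfl
      have hq0 : piU lam (A (X * derivative p - (d : ℂ) • p)) = 0 := by
        by_cases h0 : d = 0
        · have hdz : derivative p = 0 := by
            have := eq_C_of_natDegree_eq_zero (h0 ▸ hd)
            rw [this, derivative_C]
          rw [hdz, h0]
          simp only [mul_zero, Nat.cast_zero, zero_smul, sub_zero, hA0, map_zero]
        · set q : Polynomial ℂ := X * derivative p - (d : ℂ) • p with hqdef
          have hdegq : q.degree < (d : ℕ) := by
            rw [degree_lt_iff_coeff_zero]
            intro m hm
            have hm1 : 1 ≤ m := le_trans (by omega) hm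
            have hcXm : (X * derivative p).coeff m = p.coeff m * m := by
              have he1 : m = (m - 1) + 1 := by omega
              rw [he1, coeff_X_mul, coeff_derivative]
              have he2 : ((m - 1 : ℕ) : ℂ) + 1 = (((m - 1) + 1 : ℕ) : ℂ) := by
                rw [Nat.cast_add, Nat.cast_one]
              rw [he2]
            rw [hqdef, coeff_sub, hcXm, coeff_smul, smul_eq_mul]
            rcases eq_or_lt_of_le hm with he | hlt
            · rw [← he]; ring
            · rw [coeff_eq_zero_of_natDegree_lt (by omega)]
              ring
          by_cases hqz : q = 0
          · rw [hqz, hA0, map_zero]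
          · exact IH _ ((natDegree_lt_iff_degree_lt hqz).mpr hdegq) _ rfl
      set T : Module.End ℂ (Polynomial ℂ) := piU lam (A p) with hTdef
      have hcomm1 : piL lam (eVF (-1)) * T - T * piL lam (eVF (-1)) = 0 := by
        have := congrArg (piU lam) (key1 p)
        rw [map_sub, map_mul, map_mul, piU_eU, hder] at this
        rw [← hTdef] at this
        exact this
      have hsum : X * derivative p + (n : ℂ) • p
          = (X * derivative p - (d : ℂ) • p) + ((n : ℂ) + d) • p := by
        simp only [smul_eq_C_mul, C_add]; ring
      have hcomm0 : piL lam (eVF 0) * T - T * piL lam (eVF 0) = ((n : ℂ) + d) • T := by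
        have := congrArg (piU lam) (key0 p)
        rw [hsum, hAadd, hAsmul, map_sub, map_mul, map_mul, piU_eU,
          map_add, hq0, zero_add] at this
        rw [show (piU lam) (((n:ℂ) + d) • A p) = ((n:ℂ) + d) • (piU lam) (A p)
          from (piU lam).toLinearMap.map_smul _ _] at this
        rw [← hTdef] at this
        exact this
      have hm : ∀ k : ℕ, ((n : ℂ) + d) + k ≠ 0 := by
        intro k h
        have hcast : ((n : ℂ) + d) + k = ((n + (d : ℤ) + (k : ℤ) : ℤ) : ℂ) := by
          push_cast; ring
        rw [hcast, Int.cast_eq_zero] at h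
        omega
      have h1' : ∀ g, derivative (T g) = T (derivative g) := by
        intro g
        have := congrFun (congrArg DFunLike.coe hcomm1) g
        simp only [LinearMap.sub_apply, Module.End.mul_apply, LinearMap.zero_apply,
          piL_em1, sub_eq_zero] at this
        exact this
      have h0' : ∀ g, (X * derivative (T g) + lam • T g)
          - T (X * derivative g + lam • g) = ((n : ℂ) + d) • T g := by
        intro g
        have := congrFun (congrArg DFunLike.coe hcomm0) g
        simp only [LinearMap.sub_apply, Module.End.mul_apply, LinearMap.smul_apply,
          piL_e0] at this
        exact this
      exact opzero lam ((n : ℂ) + d) hm T h1' h0'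
  intro u hu
  have hrw : u = A (Φ ⟨u, hu⟩) := hcoe _ _ hu rfl
  rw [hrw]
  exact key _ _ rfl
end

section
/- For all a, λ ∈ ℂ, the annihilators in U(Vec ℝ) of the three modules ℱ_{a,λ}, ℱ_λ, and ℱ_λ⁻ coincide: Ann(ℱ_{a,λ}) = Ann(ℱ_λ) = Ann(ℱ_λ⁻). -/
open Polynomial

attribute [local instance 100] LieRing.ofAssociativeRing

noncomputable section

/-- `ρ` is the representation `ℱ_{a,λ}` of `Vec ℝ` on the space with basis
`{x^{a+m} : m ∈ ℤ}` (realized as `ℤ →₀ ℂ`, with `Finsupp.single m 1`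
representing `x^{a+m}`) if `e_n · x^{a+m} = (a + m + λ(n+1)) x^{a+m+n}` for all
`n ≥ -1` and `m ∈ ℤ`. -/
def IsFaRep (a lam : ℂ) (ρ : VecR →ₗ⁅ℂ⁆ Module.End ℂ (ℤ →₀ ℂ)) : Prop :=
  ∀ n : ℤ, -1 ≤ n → ∀ m : ℤ,
    ρ (eVF n) (Finsupp.single m 1) =
      (a + m + lam * (n + 1)) • Finsupp.single (m + n) (1 : ℂ)

/-- `ρ` is the representation `ℱ_λ⁻` of `Vec ℝ` on the space with basis
`{x^{-m} : m ≥ 1}` (realized as `ℕ →₀ ℂ`, with `Finsupp.single i 1`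
representing `x^{-(i+1)}`) if `e_n · x^{-m} = (λ(n+1) − m) x^{n-m}` when
`n − m ≤ -1` and `e_n · x^{-m} = 0` when `n − m ≥ 0`, for all `n ≥ -1`. -/
def IsFmRep (lam : ℂ) (ρ : VecR →ₗ⁅ℂ⁆ Module.End ℂ (ℕ →₀ ℂ)) : Prop :=
  ∀ n : ℤ, -1 ≤ n → ∀ i : ℕ,
    ρ (eVF n) (Finsupp.single i 1) =
      if n ≤ (i : ℤ) then
        (lam * (n + 1) - ((i : ℂ) + 1)) • Finsupp.single ((i : ℤ) - n).toNat (1 : ℂ)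
      else 0

end

namespace AnnPf
open Finsupp UniversalEnvelopingAlgebra

noncomputable section

set_option synthInstance.maxHeartbeats 1000000 in
theorem uea_induction {C : UVec → Prop}
    (hr : ∀ r : ℂ, C (algebraMap ℂ UVec r))
    (hι : ∀ D : VecR, C (UniversalEnvelopingAlgebra.ι ℂ D))
    (hmul : ∀ a b, C a → C b → C (a * b))
    (hadd : ∀ a b, C a → C b → C (a + b)) (u : UVec) : C u := by
  obtain ⟨x, rfl⟩ : ∃ x, UniversalEnvelopingAlgebra.mkAlgHom ℂ VecR x = u :=
    RingCon.mkₐ_surjective (α := ℂ) _ u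
  induction x using TensorAlgebra.induction with
  | algebraMap r => rw [AlgHom.commutes]; exact hr r
  | ι D => exact hι D
  | mul a b ha hb => rw [map_mul]; exact hmul _ _ ha hb
  | add a b ha hb => rw [map_add]; exact hadd _ _ ha hb

lemma eVF_natCast (j : ℕ) : eVF ((j : ℤ) - 1) = Polynomial.mkDerivation ℂ (X ^ j) := by
  unfold eVF
  congr 2
  omega

lemma mem_span_eVF (D : VecR) :
    D ∈ Submodule.span ℂ (Set.range fun j : ℕ => eVF ((j : ℤ) - 1)) := by
  have hD : D = Polynomial.mkDerivation ℂ (D X) :=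
    Polynomial.derivation_ext (by rw [Polynomial.mkDerivation_X])
  rw [hD]
  induction (D X) using Polynomial.induction_on' with
  | add p q hp hq => rw [map_add]; exact add_mem hp hq
  | monomial n c =>
      rw [← Polynomial.smul_X_eq_monomial, map_smul]
      exact Submodule.smul_mem _ _ (Submodule.subset_span ⟨n, eVF_natCast n⟩)

section Intertwine
variable {V W : Type} [AddCommGroup V] [Module ℂ V] [AddCommGroup W] [Module ℂ W]
variable (ρ1 : VecR →ₗ⁅ℂ⁆ Module.End ℂ V) (ρ2 : VecR →ₗ⁅ℂ⁆ Module.End ℂ W) (T : V →ₗ[ℂ] W)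

lemma lie_intertwine
    (h : ∀ n : ℤ, -1 ≤ n → ∀ v, T (ρ1 (eVF n) v) = ρ2 (eVF n) (T v)) (D : VecR) :
    ∀ v, T (ρ1 D v) = ρ2 D (T v) := by
  induction mem_span_eVF D using Submodule.span_induction with
  | mem x hx => obtain ⟨j, rfl⟩ := hx; exact h _ (by omega)
  | zero => simp
  | add x y _ _ hx hy => intro v; simp [map_add, hx v, hy v]
  | smul c x _ hx => intro v; simp [map_smul, hx v]

lemma uea_intertwine
    (h : ∀ n : ℤ, -1 ≤ n → ∀ v, T (ρ1 (eVF n) v) = ρ2 (eVF n) (T v)) (u : UVec) :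
    ∀ v, T ((UniversalEnvelopingAlgebra.lift ℂ ρ1 u) v)
      = (UniversalEnvelopingAlgebra.lift ℂ ρ2 u) (T v) := by
  induction u using uea_induction with
  | hr r => intro v; simp [AlgHom.commutes, Module.algebraMap_end_apply]
  | hι D =>
      intro v
      rw [UniversalEnvelopingAlgebra.lift_ι_apply, UniversalEnvelopingAlgebra.lift_ι_apply]
      exact lie_intertwine ρ1 ρ2 T h D v
  | hmul a b ha hb => intro v; rw [map_mul, map_mul]; simp only [Module.End.mul_apply, ha, hb]
  | hadd a b ha hb => intro v; rw [map_add, map_add]; simp only [LinearMap.add_apply, map_add, ha, hb]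

end Intertwine
end
end AnnPf
namespace AnnPf
noncomputable section
open Finsupp UniversalEnvelopingAlgebra

variable (lam : ℂ) (A : Type) [CommRing A] [Algebra ℂ A] (α : A)

/-- coefficient `α + m + λ j`. -/
def cf (m : ℤ) (j : ℕ) : A := α + algebraMap ℂ A ((m : ℂ) + lam * (j : ℂ))

/-- the operator corresponding to `e_{j-1}`. -/
def op (j : ℕ) : (ℤ →₀ A) →ₗ[ℂ] (ℤ →₀ A) :=
  Finsupp.lsum ℂ fun m =>
    (Finsupp.lsingle (m + (j : ℤ) - 1)).comp (LinearMap.mulLeft ℂ (cf lam A α m j))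

@[simp] lemma op_single (j : ℕ) (m : ℤ) (p : A) :
    op lam A α j (Finsupp.single m p)
      = Finsupp.single (m + (j : ℤ) - 1) (cf lam A α m j * p) := by
  rw [op, Finsupp.lsum_single, LinearMap.comp_apply, LinearMap.mulLeft_apply,
    Finsupp.lsingle_apply]

def toM : Polynomial ℂ →ₗ[ℂ] Module.End ℂ (ℤ →₀ A) :=
  (Polynomial.basisMonomials ℂ).constr ℂ (op lam A α)

@[simp] lemma toM_X_pow (j : ℕ) : toM lam A α (X ^ j) = op lam A α j := by
  have h : (X : Polynomial ℂ) ^ j = (Polynomial.basisMonomials ℂ) j := by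
    simp [Polynomial.X_pow_eq_monomial]
  rw [toM, h, Module.Basis.constr_basis]

lemma key_pow (i j : ℕ) :
    toM lam A α (derivative (X ^ j) * X ^ i - derivative (X ^ i) * X ^ j)
      = toM lam A α (X ^ i) * toM lam A α (X ^ j)
        - toM lam A α (X ^ j) * toM lam A α (X ^ i) := by
  rw [Polynomial.derivative_X_pow, Polynomial.derivative_X_pow]
  rw [show Polynomial.C (j : ℂ) * X ^ (j - 1) * X ^ i
      = (j : ℂ) • (X ^ (j - 1 + i) : Polynomial ℂ) by
    rw [Polynomial.smul_eq_C_mul, pow_add, mul_assoc]]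
  rw [show Polynomial.C (i : ℂ) * X ^ (i - 1) * X ^ j
      = (i : ℂ) • (X ^ (i - 1 + j) : Polynomial ℂ) by
    rw [Polynomial.smul_eq_C_mul, pow_add, mul_assoc]]
  rw [map_sub, map_smul, map_smul, toM_X_pow, toM_X_pow, toM_X_pow, toM_X_pow]
  apply Finsupp.lhom_ext
  intro m p
  simp only [LinearMap.sub_apply, LinearMap.smul_apply, Module.End.mul_apply, op_single,
    Finsupp.smul_single, Nat.cast_zero, zero_smul, Finsupp.single_zero, sub_zero, zero_sub,
    Nat.zero_sub, Nat.add_zero, Nat.zero_add, add_zero, CharP.cast_eq_zero]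
  rcases Nat.eq_zero_or_pos i with hi | hi <;> rcases Nat.eq_zero_or_pos j with hj | hj
  · subst hi; subst hj
    simp only [Nat.cast_zero, Nat.zero_sub, Nat.add_zero, Nat.zero_add, add_zero, zero_smul,
      Finsupp.single_zero, zero_sub, sub_zero, CharP.cast_eq_zero]
    simp
  · subst hi
    simp only [Nat.cast_zero, Nat.zero_sub, Nat.add_zero, Nat.zero_add, add_zero, zero_smul,
      Finsupp.single_zero, zero_sub, sub_zero, CharP.cast_eq_zero]
    have e2 : ((j - 1 : ℕ) : ℂ) = (j : ℂ) - 1 := by push_cast [Nat.cast_sub hj]; ring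
    have k1 : m + ((j - 1 : ℕ) : ℤ) - 1 = m + j - 2 := by omega
    have k2 : m + (j : ℤ) - 1 + (0:ℤ) - 1 = m + j - 2 := by ring
    have k2' : m + (j : ℤ) - 1 - 1 = m + j - 2 := by ring
    have k3 : m + (0:ℤ) - 1 + (j : ℤ) - 1 = m + j - 2 := by ring
    have k3' : m - 1 + (j : ℤ) - 1 = m + j - 2 := by ring
    simp only [k1, k2, k2', k3, k3']
    rw [← Finsupp.single_sub]
    congr 1
    simp only [cf, Algebra.smul_def, e2, Nat.cast_zero]
    push_cast
    simp only [map_add, map_sub, map_mul, map_one, map_intCast, map_natCast, map_ofNat,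
      map_zero, mul_zero, add_zero]
    ring
  · subst hj
    simp only [Nat.cast_zero, Nat.zero_sub, Nat.add_zero, Nat.zero_add, add_zero, zero_smul,
      Finsupp.single_zero, zero_sub, sub_zero, CharP.cast_eq_zero]
    have e2 : ((i - 1 : ℕ) : ℂ) = (i : ℂ) - 1 := by push_cast [Nat.cast_sub hi]; ring
    have k1 : m + ((i - 1 : ℕ) : ℤ) - 1 = m + i - 2 := by omega
    have k2 : m + (i : ℤ) - 1 + (0:ℤ) - 1 = m + i - 2 := by ring
    have k2' : m + (i : ℤ) - 1 - 1 = m + i - 2 := by ring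
    have k3 : m + (0:ℤ) - 1 + (i : ℤ) - 1 = m + i - 2 := by ring
    have k3' : m - 1 + (i : ℤ) - 1 = m + i - 2 := by ring
    simp only [k1, k2, k2', k3, k3']
    rw [← Finsupp.single_sub, ← Finsupp.single_neg]
    congr 1
    simp only [cf, Algebra.smul_def, e2, Nat.cast_zero]
    push_cast
    simp only [map_add, map_sub, map_mul, map_one, map_intCast, map_natCast, map_ofNat,
      map_zero, mul_zero, add_zero]
    ring
  · have e3 : ((j - 1 + i : ℕ) : ℂ) = (j : ℂ) + (i : ℂ) - 1 := by
      push_cast [Nat.cast_sub hj]; ring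
    have e4 : ((i - 1 + j : ℕ) : ℂ) = (i : ℂ) + (j : ℂ) - 1 := by
      push_cast [Nat.cast_sub hi]; ring
    have k1 : m + ((j - 1 + i : ℕ) : ℤ) - 1 = m + i + j - 2 := by omega
    have k2 : m + ((i - 1 + j : ℕ) : ℤ) - 1 = m + i + j - 2 := by omega
    have k3 : m + (j:ℤ) - 1 + (i:ℤ) - 1 = m + i + j - 2 := by ring
    have k4 : m + (i:ℤ) - 1 + (j:ℤ) - 1 = m + i + j - 2 := by ring
    simp only [k1, k2, k3, k4]
    rw [← Finsupp.single_sub, ← Finsupp.single_sub]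
    congr 1
    simp only [cf, Algebra.smul_def, e3, e4]
    push_cast
    simp only [map_add, map_sub, map_mul, map_one, map_intCast, map_natCast, map_ofNat,
      map_zero, mul_zero, add_zero]
    ring

lemma key_identity (f g : Polynomial ℂ) :
    toM lam A α (derivative g * f - derivative f * g)
      = toM lam A α f * toM lam A α g - toM lam A α g * toM lam A α f := by
  induction f using Polynomial.induction_on' with
  | add p q hp hq =>
      simp only [derivative_add, map_add] at *
      rw [show derivative g * (p + q) - (derivative p + derivative q) * g
            = (derivative g * p - derivative p * g) + (derivative g * q - derivative q * g) by
          ring, map_add, hp, hq]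
      noncomm_ring
  | monomial i c =>
      induction g using Polynomial.induction_on' with
      | add p q hp hq =>
          simp only [derivative_add, map_add] at *
          rw [show (derivative p + derivative q) * monomial i c
                - derivative (monomial i c) * (p + q)
              = (derivative p * monomial i c - derivative (monomial i c) * p)
                + (derivative q * monomial i c - derivative (monomial i c) * q) by ring,
            map_add, hp, hq]
          noncomm_ring
      | monomial j d =>
          rw [← Polynomial.smul_X_eq_monomial, ← Polynomial.smul_X_eq_monomial]
          simp only [derivative_smul, smul_mul_assoc, mul_smul_comm, smul_sub, map_smul,
            smul_smul]
          rw [mul_comm d c, ← smul_sub, map_smul, key_pow]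
          exact smul_sub (c * d) (toM lam A α (X ^ i) * toM lam A α (X ^ j))
            (toM lam A α (X ^ j) * toM lam A α (X ^ i))

def rho : VecR →ₗ⁅ℂ⁆ Module.End ℂ (ℤ →₀ A) where
  toFun D := toM lam A α (D X)
  map_add' D1 D2 := by
    show toM lam A α ((D1 + D2) X) = toM lam A α (D1 X) + toM lam A α (D2 X)
    rw [Derivation.add_apply, map_add]
  map_smul' c D := by
    show toM lam A α ((c • D) X) = c • toM lam A α (D X)
    rw [Derivation.smul_apply, map_smul]
  map_lie' {D1 D2} := by
    show toM lam A α ((⁅D1, D2⁆ : VecR) X) = ⁅toM lam A α (D1 X), toM lam A α (D2 X)⁆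
    have hX : (⁅D1, D2⁆ : VecR) X = derivative (D2 X) * D1 X - derivative (D1 X) * D2 X := by
      rw [Derivation.commutator_apply, vecR_apply D1 (D2 X), vecR_apply D2 (D1 X)]
    rw [hX, key_identity]; exact (LieRing.of_associative_ring_bracket (A := Module.End ℂ (ℤ →₀ A)) _ _).symm

lemma rho_eVF (n : ℤ) (hn : -1 ≤ n) (m : ℤ) (p : A) :
    rho lam A α (eVF n) (Finsupp.single m p)
      = Finsupp.single (m + n)
        ((α + algebraMap ℂ A ((m : ℂ) + lam * ((n : ℂ) + 1))) * p) := by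
  show toM lam A α (eVF n X) _ = _
  rw [show (eVF n) X = X ^ (n + 1).toNat by rw [eVF, Polynomial.mkDerivation_X]]
  rw [toM_X_pow, op_single]
  have h1 : m + (((n + 1).toNat : ℕ) : ℤ) - 1 = m + n := by omega
  have h2 : (((n + 1).toNat : ℕ) : ℂ) = (n : ℂ) + 1 := by
    have : (((n + 1).toNat : ℕ) : ℤ) = n + 1 := by omega
    calc (((n + 1).toNat : ℕ) : ℂ) = (((((n+1).toNat : ℕ) : ℤ)) : ℂ) := by push_cast; ring
    _ = ((n : ℂ) + 1) := by rw [this]; push_cast; ring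
  rw [h1, cf, h2]

end
end AnnPf
namespace AnnPf
noncomputable section
open Finsupp UniversalEnvelopingAlgebra

variable (lam : ℂ)

/-- The generic representation: `A = ℂ[t]`, `α = t`. -/
abbrev rhoGen : VecR →ₗ⁅ℂ⁆ Module.End ℂ (ℤ →₀ Polynomial ℂ) := rho lam (Polynomial ℂ) X

abbrev PGen : UVec →ₐ[ℂ] Module.End ℂ (ℤ →₀ Polynomial ℂ) :=
  UniversalEnvelopingAlgebra.lift ℂ (rhoGen lam)

/-- The specialization `a = 0`: `A = ℂ`, `α = 0`. -/
abbrev rho0 : VecR →ₗ⁅ℂ⁆ Module.End ℂ (ℤ →₀ ℂ) := rho lam ℂ 0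

abbrev P0 : UVec →ₐ[ℂ] Module.End ℂ (ℤ →₀ ℂ) :=
  UniversalEnvelopingAlgebra.lift ℂ (rho0 lam)

lemma rhoGen_eVF (n : ℤ) (hn : -1 ≤ n) (m : ℤ) (p : Polynomial ℂ) :
    rhoGen lam (eVF n) (Finsupp.single m p)
      = Finsupp.single (m + n) ((X + Polynomial.C ((m : ℂ) + lam * ((n : ℂ) + 1))) * p) := by
  rw [rho_eVF lam (Polynomial ℂ) X n hn m p, Polynomial.algebraMap_eq]

lemma isFaRep_rho0 : IsFaRep 0 lam (rho0 lam) := by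
  intro n hn m
  rw [rho_eVF lam ℂ 0 n hn m 1, Finsupp.smul_single, smul_eq_mul, mul_one]
  congr 1
  simp only [Algebra.algebraMap_self, RingHom.id_apply, mul_one, zero_add]

/-- evaluation intertwiners from the generic module. -/
def Ts (a : ℂ) (s : ℤ) : (ℤ →₀ Polynomial ℂ) →ₗ[ℂ] (ℤ →₀ ℂ) :=
  (Finsupp.lmapDomain ℂ ℂ (fun m : ℤ => m + s)).comp
    (Finsupp.mapRange.linearMap (Polynomial.leval (a + s)))

@[simp] lemma Ts_single (a : ℂ) (s m : ℤ) (p : Polynomial ℂ) :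
    Ts a s (Finsupp.single m p) = Finsupp.single (m + s) (p.eval (a + s)) := by
  rw [Ts, LinearMap.comp_apply, Finsupp.mapRange.linearMap_apply, Finsupp.mapRange_single,
    Finsupp.lmapDomain_apply, Finsupp.mapDomain_single]
  rfl

lemma Ts_apply (a : ℂ) (s : ℤ) (w : ℤ →₀ Polynomial ℂ) (k : ℤ) :
    (Ts a s w) (k + s) = (w k).eval (a + s) := by
  rw [Ts, LinearMap.comp_apply, Finsupp.lmapDomain_apply,
    Finsupp.mapDomain_apply (add_left_injective s)]
  simp

lemma Ts_intertwine (a : ℂ) (ρ : VecR →ₗ⁅ℂ⁆ Module.End ℂ (ℤ →₀ ℂ)) (hρ : IsFaRep a lam ρ)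
    (s : ℤ) (n : ℤ) (hn : -1 ≤ n) (v : ℤ →₀ Polynomial ℂ) :
    Ts a s (rhoGen lam (eVF n) v) = ρ (eVF n) (Ts a s v) := by
  induction v using Finsupp.induction_linear with
  | zero => simp
  | add f g hf hg => simp only [map_add, hf, hg]
  | single m p =>
      rw [rhoGen_eVF lam n hn, Ts_single, Ts_single,
        show Finsupp.single (m + s) (p.eval (a + s))
            = (p.eval (a + s)) • Finsupp.single (m + s) (1 : ℂ) by
          rw [Finsupp.smul_single, smul_eq_mul, mul_one],
        map_smul]
      rw [hρ n hn (m + s)]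
      rw [Finsupp.smul_single, Finsupp.smul_single, smul_eq_mul, smul_eq_mul, mul_one]
      rw [show m + n + s = m + s + n by ring]
      congr 1
      rw [Polynomial.eval_mul]
      push_cast
      simp only [Polynomial.eval_add, Polynomial.eval_X, Polynomial.eval_C]
      ring

lemma Ts_uea (a : ℂ) (ρ : VecR →ₗ⁅ℂ⁆ Module.End ℂ (ℤ →₀ ℂ)) (hρ : IsFaRep a lam ρ)
    (s : ℤ) (u : UVec) (v : ℤ →₀ Polynomial ℂ) :
    Ts a s (PGen lam u v) = (UniversalEnvelopingAlgebra.lift ℂ ρ u) (Ts a s v) :=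
  uea_intertwine (rhoGen lam) ρ (Ts a s) (fun n hn v => Ts_intertwine lam a ρ hρ s n hn v) u v

lemma end_eq_zero_int (F : Module.End ℂ (ℤ →₀ ℂ)) (h : ∀ m, F (Finsupp.single m 1) = 0) :
    F = 0 := by
  apply LinearMap.ext
  intro v
  induction v using Finsupp.induction_linear with
  | zero => simp
  | add f g hf hg => rw [map_add, hf, hg]; simp
  | single m c =>
      rw [show Finsupp.single m c = c • Finsupp.single m (1:ℂ) by
        rw [Finsupp.smul_single, smul_eq_mul, mul_one], map_smul, h m]
      simp

lemma end_eq_zero_nat (F : Module.End ℂ (ℕ →₀ ℂ)) (h : ∀ i, F (Finsupp.single i 1) = 0) :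
    F = 0 := by
  apply LinearMap.ext
  intro v
  induction v using Finsupp.induction_linear with
  | zero => simp
  | add f g hf hg => rw [map_add, hf, hg]; simp
  | single m c =>
      rw [show Finsupp.single m c = c • Finsupp.single m (1:ℂ) by
        rw [Finsupp.smul_single, smul_eq_mul, mul_one], map_smul, h m]
      simp

/-- multiplication by `t` on the generic module. -/
def mulT : (ℤ →₀ Polynomial ℂ) →ₗ[ℂ] (ℤ →₀ Polynomial ℂ) :=
  Finsupp.mapRange.linearMap (LinearMap.mulLeft ℂ (X : Polynomial ℂ))

@[simp] lemma mulT_single (m : ℤ) (p : Polynomial ℂ) :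
    mulT (Finsupp.single m p) = Finsupp.single m (X * p) := by
  rw [mulT, Finsupp.mapRange.linearMap_apply, Finsupp.mapRange_single]
  rfl

lemma mulT_intertwine (n : ℤ) (hn : -1 ≤ n) (v : ℤ →₀ Polynomial ℂ) :
    mulT (rhoGen lam (eVF n) v) = rhoGen lam (eVF n) (mulT v) := by
  induction v using Finsupp.induction_linear with
  | zero => simp
  | add f g hf hg => simp only [map_add, hf, hg]
  | single m p =>
      rw [rhoGen_eVF lam n hn, mulT_single, mulT_single, rhoGen_eVF lam n hn]
      congr 1
      ring

lemma PGen_zero (u : UVec) (h : ∀ m, PGen lam u (Finsupp.single m 1) = 0) :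
    PGen lam u = 0 := by
  have hc : ∀ v, mulT (PGen lam u v) = PGen lam u (mulT v) :=
    uea_intertwine (rhoGen lam) (rhoGen lam) mulT (fun n hn v => mulT_intertwine lam n hn v) u
  have key : ∀ (k : ℕ) (c : ℂ) (m : ℤ),
      PGen lam u (Finsupp.single m ((Polynomial.monomial k) c)) = 0 := by
    intro k
    induction k with
    | zero =>
        intro c m
        rw [show Finsupp.single m ((Polynomial.monomial 0) c)
            = c • Finsupp.single m (1 : Polynomial ℂ) by
          rw [Finsupp.smul_single, Polynomial.smul_eq_C_mul, mul_one,
            Polynomial.monomial_zero_left]]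
        rw [map_smul, h m, smul_zero]
    | succ k ih =>
        intro c m
        rw [show Finsupp.single m ((Polynomial.monomial (k+1)) c)
            = mulT (Finsupp.single m ((Polynomial.monomial k) c)) by
          rw [mulT_single, Polynomial.X_mul_monomial]]
        rw [← hc, ih c m, map_zero]
  apply LinearMap.ext
  intro v
  induction v using Finsupp.induction_linear with
  | zero => simp
  | add f g hf hg => rw [map_add, hf, hg]; simp
  | single m p =>
      induction p using Polynomial.induction_on' with
      | add p q hp hq =>
          rw [show Finsupp.single m (p + q) = Finsupp.single m p + Finsupp.single m q by
            rw [Finsupp.single_add], map_add, hp, hq]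
          simp
      | monomial k c => rw [key k c m]; simp

end
end AnnPf
namespace AnnPf
noncomputable section
open Finsupp UniversalEnvelopingAlgebra

variable (lam : ℂ)

lemma poly_zero_ge (p : Polynomial ℂ) (c : ℂ) (b : ℤ)
    (h : ∀ s : ℤ, b ≤ s → p.eval (c + (s : ℂ)) = 0) : p = 0 := by
  apply Polynomial.eq_zero_of_infinite_isRoot p
  apply Set.infinite_of_injective_forall_mem (f := fun n : ℕ => c + ((b + (n : ℤ) : ℤ) : ℂ))
  case hi =>
    intro x y hxy
    simp only [add_right_inj] at hxy
    have : ((b + (x:ℤ) : ℤ) : ℂ) = ((b + (y:ℤ) : ℤ) : ℂ) := hxy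
    rw [Int.cast_inj] at this
    omega
  case hf =>
    intro n
    exact h (b + n) (by omega)

lemma poly_zero_le (p : Polynomial ℂ) (c : ℂ) (b : ℤ)
    (h : ∀ s : ℤ, s ≤ b → p.eval (c + (s : ℂ)) = 0) : p = 0 := by
  apply Polynomial.eq_zero_of_infinite_isRoot p
  apply Set.infinite_of_injective_forall_mem (f := fun n : ℕ => c + ((b - (n : ℤ) : ℤ) : ℂ))
  case hi =>
    intro x y hxy
    simp only [add_right_inj] at hxy
    have : ((b - (x:ℤ) : ℤ) : ℂ) = ((b - (y:ℤ) : ℤ) : ℂ) := hxy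
    rw [Int.cast_inj] at this
    omega
  case hf =>
    intro n
    exact h (b - n) (by omega)

lemma ker_faRep (a : ℂ) (ρ : VecR →ₗ⁅ℂ⁆ Module.End ℂ (ℤ →₀ ℂ)) (hρ : IsFaRep a lam ρ)
    (u : UVec) :
    UniversalEnvelopingAlgebra.lift ℂ ρ u = 0 ↔ PGen lam u = 0 := by
  constructor
  · intro h
    apply PGen_zero
    intro m
    have hs : ∀ s : ℤ, Ts a s (PGen lam u (Finsupp.single m (1 : Polynomial ℂ))) = 0 := by
      intro s
      rw [Ts_uea lam a ρ hρ s u, h, LinearMap.zero_apply]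
    apply Finsupp.ext
    intro k
    rw [Finsupp.coe_zero, Pi.zero_apply]
    apply poly_zero_ge _ a 0
    intro s _
    have := Finsupp.ext_iff.mp (hs s) (k + s)
    simp only [Finsupp.coe_zero, Pi.zero_apply] at this
    rw [Ts_apply] at this
    exact this
  · intro h
    apply end_eq_zero_int
    intro m
    have h1 : Ts a 0 (Finsupp.single m (1 : Polynomial ℂ)) = Finsupp.single m 1 := by
      rw [Ts_single, add_zero, Polynomial.eval_one]
    rw [← h1, ← Ts_uea lam a ρ hρ 0 u, h, LinearMap.zero_apply, map_zero]

end
end AnnPf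
namespace AnnPf
noncomputable section
open Finsupp UniversalEnvelopingAlgebra

variable (lam : ℂ)

lemma eVF_X (n : ℤ) : (eVF n) X = X ^ (n + 1).toNat := by
  rw [eVF, Polynomial.mkDerivation_X]

lemma piL_apply_poly (D : VecR) (g : Polynomial ℂ) :
    piL lam D g = D g + lam • (derivative (D X) * g) := rfl

/-- the inclusion `ℱ_λ ⊆ ℱ_{0,λ}`. -/
def J : Polynomial ℂ →ₗ[ℂ] (ℤ →₀ ℂ) where
  toFun p := Finsupp.mapDomain (fun k : ℕ => (k : ℤ)) p.toFinsupp.coeff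
  map_add' p q := by
    show Finsupp.mapDomain _ (p + q).toFinsupp.coeff = _
    rw [Polynomial.toFinsupp_add, AddMonoidAlgebra.coeff_add, Finsupp.mapDomain_add]
  map_smul' c p := by
    show Finsupp.mapDomain _ (c • p).toFinsupp.coeff = _
    rw [Polynomial.toFinsupp_smul, AddMonoidAlgebra.coeff_smul, RingHom.id_apply, Finsupp.mapDomain_smul]

@[simp] lemma J_monomial (k : ℕ) (c : ℂ) :
    J (Polynomial.monomial k c) = Finsupp.single (k : ℤ) c := by
  show Finsupp.mapDomain _ (Polynomial.monomial k c).toFinsupp.coeff = _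
  rw [Polynomial.toFinsupp_monomial, AddMonoidAlgebra.coeff_single, Finsupp.mapDomain_single]

lemma J_injective : Function.Injective J := by
  intro p q h
  have h2 : Finsupp.mapDomain (fun k : ℕ => (k : ℤ)) p.toFinsupp.coeff
      = Finsupp.mapDomain (fun k : ℕ => (k : ℤ)) q.toFinsupp.coeff := h
  have h3 := Finsupp.mapDomain_injective (fun x y hxy => by exact_mod_cast hxy) h2
  exact Polynomial.toFinsupp_injective (AddMonoidAlgebra.coeff_injective h3)

lemma J_intertwine (n : ℤ) (hn : -1 ≤ n) (v : Polynomial ℂ) :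
    J (piL lam (eVF n) v) = rho0 lam (eVF n) (J v) := by
  induction v using Polynomial.induction_on' with
  | add p q hp hq => simp only [map_add, hp, hq]
  | monomial k c =>
      rw [piL_apply_poly, vecR_apply, eVF_X, Polynomial.derivative_monomial,
        Polynomial.derivative_X_pow]
      set j := (n + 1).toNat with hjdef
      clear_value j
      have hj : (j : ℤ) = n + 1 := by omega
      rw [show (Polynomial.monomial (k - 1)) (c * (k:ℂ)) * X ^ j
          = Polynomial.monomial (k - 1 + j) (c * (k:ℂ)) by
        rw [Polynomial.X_pow_eq_monomial, Polynomial.monomial_mul_monomial, mul_one]]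
      rw [show Polynomial.C ((j:ℕ):ℂ) * X ^ (j - 1) * Polynomial.monomial k c
          = Polynomial.monomial (j - 1 + k) (((j:ℕ):ℂ) * c) by
        rw [Polynomial.C_mul_X_pow_eq_monomial, Polynomial.monomial_mul_monomial]]
      rw [map_add, map_smul, J_monomial, J_monomial, J_monomial,
        rho_eVF lam ℂ 0 n hn]
      simp only [Algebra.algebraMap_self, RingHom.id_apply, zero_add]
      apply Finsupp.ext
      intro q
      simp only [Finsupp.add_apply, Finsupp.smul_apply, Finsupp.single_apply, smul_eq_mul]
      rcases Nat.eq_zero_or_pos j with hjz | hjz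
      · have hn2 : n = -1 := by omega
        subst hjz
        subst hn2
        split_ifs <;>
          (first
            | (exfalso; omega)
            | (push_cast; (try ring1); done)
            | (have hk0 : k = 0 := (by omega); subst hk0; push_cast; (try ring1); done))
      · have hjC : ((j : ℕ) : ℂ) = (n : ℂ) + 1 := by
          exact_mod_cast congrArg (Int.cast : ℤ → ℂ) hj
        split_ifs <;>
          (first
            | (exfalso; omega)
            | ((try simp only [hjC]); push_cast; (try ring1); done)
            | (have hk0 : k = 0 := (by omega); subst hk0; (try simp only [hjC]); push_cast; (try ring1); done))
end
end AnnPf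
namespace AnnPf
noncomputable section
open Finsupp UniversalEnvelopingAlgebra

variable (lam : ℂ)

lemma J_uea (u : UVec) (v : Polynomial ℂ) :
    J (piU lam u v) = P0 lam u (J v) :=
  uea_intertwine (piL lam) (rho0 lam) J (fun n hn v => J_intertwine lam n hn v) u v

lemma ker_piU_iff (u : UVec) : piU lam u = 0 ↔ PGen lam u = 0 := by
  constructor
  · intro h
    apply PGen_zero
    intro m
    -- coefficients of w := PGen u (single m 1) vanish
    have hP0 : ∀ k : ℤ, 0 ≤ k → P0 lam u (Finsupp.single k 1) = 0 := by
      intro k hk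
      have : Finsupp.single k (1:ℂ) = J (Polynomial.monomial k.toNat 1) := by
        rw [J_monomial]
        congr 1
        omega
      rw [this, ← J_uea, h, LinearMap.zero_apply, map_zero]
    apply Finsupp.ext
    intro k
    rw [Finsupp.coe_zero, Pi.zero_apply]
    apply poly_zero_ge _ 0 (-m)
    intro s hs
    have h1 : Ts 0 s (PGen lam u (Finsupp.single m (1 : Polynomial ℂ)))
        = P0 lam u (Ts 0 s (Finsupp.single m 1)) :=
      Ts_uea lam 0 (rho0 lam) (isFaRep_rho0 lam) s u _
    rw [Ts_single, Polynomial.eval_one, hP0 (m + s) (by omega)] at h1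
    have h2 := Finsupp.ext_iff.mp h1 (k + s)
    rw [Ts_apply, Finsupp.coe_zero, Pi.zero_apply] at h2
    rw [zero_add] at h2 ⊢
    exact h2
  · intro h
    have hP0 : P0 lam u = 0 := (ker_faRep lam 0 (rho0 lam) (isFaRep_rho0 lam) u).mpr h
    apply LinearMap.ext
    intro v
    apply J_injective
    rw [J_uea, hP0, LinearMap.zero_apply, LinearMap.zero_apply, map_zero]

/-- the projection `ℱ_{0,λ} → ℱ_λ⁻`. -/
def Q : (ℤ →₀ ℂ) →ₗ[ℂ] (ℕ →₀ ℂ) :=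
  Finsupp.lcomapDomain (fun i : ℕ => -(i : ℤ) - 1) (fun x y hxy => by
    simp only at hxy; omega)

lemma Q_apply (w : ℤ →₀ ℂ) (i : ℕ) : Q w i = w (-(i : ℤ) - 1) := rfl

lemma Q_single (m : ℤ) (c : ℂ) :
    Q (Finsupp.single m c)
      = if m ≤ -1 then Finsupp.single (-m - 1).toNat c else 0 := by
  apply Finsupp.ext
  intro i
  rw [Q_apply]
  rcases le_or_gt m (-1) with hm | hm
  · rw [if_pos hm]
    rw [Finsupp.single_apply, Finsupp.single_apply]
    by_cases h : m = -(i:ℤ) - 1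
    · rw [if_pos h, if_pos (by omega)]
    · rw [if_neg h, if_neg (by omega)]
  · rw [if_neg (by omega), Finsupp.single_apply, if_neg (by omega), Finsupp.coe_zero,
      Pi.zero_apply]

lemma Q_intertwine (ρm : VecR →ₗ⁅ℂ⁆ Module.End ℂ (ℕ →₀ ℂ)) (hρm : IsFmRep lam ρm)
    (n : ℤ) (hn : -1 ≤ n) (v : ℤ →₀ ℂ) :
    Q (rho0 lam (eVF n) v) = ρm (eVF n) (Q v) := by
  induction v using Finsupp.induction_linear with
  | zero => simp only [map_zero]
  | add f g hf hg => simp only [map_add, hf, hg]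
  | single m c =>
      rw [rho_eVF lam ℂ 0 n hn, Q_single, Q_single]
      simp only [Algebra.algebraMap_self, RingHom.id_apply, zero_add]
      rcases le_or_gt m (-1) with hm | hm
      · rw [if_pos hm]
        rw [show Finsupp.single (-m - 1).toNat c = c • Finsupp.single (-m - 1).toNat (1:ℂ) by
          rw [Finsupp.smul_single, smul_eq_mul, mul_one], map_smul, hρm n hn]
        have hcast : (((-m - 1).toNat : ℕ) : ℂ) = -(m:ℂ) - 1 := by
          have : (((-m - 1).toNat : ℕ) : ℤ) = -m - 1 := by omega
          exact_mod_cast congrArg (Int.cast : ℤ → ℂ) this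
        rcases le_or_gt (m + n) (-1) with hmn | hmn
        · rw [if_pos hmn, if_pos (by omega)]
          rw [Finsupp.smul_single, Finsupp.smul_single, smul_eq_mul, smul_eq_mul, mul_one]
          rw [show ((((-m - 1).toNat : ℕ) : ℤ) - n).toNat = (-(m + n) - 1).toNat by omega]
          congr 1
          rw [hcast]
          push_cast
          ring
        · rw [if_neg (by omega), if_neg (by omega), smul_zero]
      · rw [if_neg (show ¬ m ≤ -1 by omega), map_zero]
        by_cases h1 : m + n ≤ -1
        · have hm0 : m = 0 := by omega
          have hn0 : n = -1 := by omega
          subst hm0; subst hn0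
          rw [if_pos (by omega : (0:ℤ) + -1 ≤ -1)]
          rw [show (((0:ℤ) : ℂ) + lam * (((-1:ℤ) : ℂ) + 1)) * c = 0 by push_cast; ring]
          rw [Finsupp.single_zero]
        · rw [if_neg h1]
end
end AnnPf
namespace AnnPf
noncomputable section
open Finsupp UniversalEnvelopingAlgebra

variable (lam : ℂ)

lemma Q_uea (ρm : VecR →ₗ⁅ℂ⁆ Module.End ℂ (ℕ →₀ ℂ)) (hρm : IsFmRep lam ρm)
    (u : UVec) (v : ℤ →₀ ℂ) :
    Q (P0 lam u v) = (UniversalEnvelopingAlgebra.lift ℂ ρm u) (Q v) :=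
  uea_intertwine (rho0 lam) ρm Q (fun n hn v => Q_intertwine lam ρm hρm n hn v) u v

lemma ker_fmRep (ρm : VecR →ₗ⁅ℂ⁆ Module.End ℂ (ℕ →₀ ℂ)) (hρm : IsFmRep lam ρm)
    (u : UVec) :
    UniversalEnvelopingAlgebra.lift ℂ ρm u = 0 ↔ PGen lam u = 0 := by
  constructor
  · intro h
    apply PGen_zero
    intro m
    apply Finsupp.ext
    intro k
    rw [Finsupp.coe_zero, Pi.zero_apply]
    apply poly_zero_le _ 0 (-1 - k)
    intro s hs
    -- Q (Ts 0 s w) = lift ρm u (Q (single (m+s) 1)) = 0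
    have h1 : Q (Ts 0 s (PGen lam u (Finsupp.single m (1 : Polynomial ℂ))))
        = UniversalEnvelopingAlgebra.lift ℂ ρm u (Q (Ts 0 s (Finsupp.single m 1))) := by
      rw [Ts_uea lam 0 (rho0 lam) (isFaRep_rho0 lam) s u,
        Q_uea lam ρm hρm u]
    rw [h, LinearMap.zero_apply] at h1
    -- evaluate at index i := (-(k+s)-1).toNat
    have h2 := Finsupp.ext_iff.mp h1 (-(k + s) - 1).toNat
    rw [Q_apply, Finsupp.coe_zero, Pi.zero_apply,
      show -(((-(k + s) - 1).toNat : ℕ) : ℤ) - 1 = k + s by omega, Ts_apply] at h2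
    rw [zero_add] at h2 ⊢
    exact h2
  · intro h
    have hP0 : P0 lam u = 0 := (ker_faRep lam 0 (rho0 lam) (isFaRep_rho0 lam) u).mpr h
    apply end_eq_zero_nat
    intro i
    have h1 : Finsupp.single i (1:ℂ) = Q (Finsupp.single (-(i:ℤ) - 1) 1) := by
      rw [Q_single, if_pos (by omega)]
      congr 1
      omega
    rw [h1, ← Q_uea lam ρm hρm u, hP0, LinearMap.zero_apply, map_zero]

end
end AnnPf


/-- For all `a, λ ∈ ℂ`, the annihilators of `ℱ_{a,λ}`, `ℱ_λ`, and `ℱ_λ⁻` in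
`U(Vec ℝ)` coincide. -/
theorem ann_Fa_eq_ann_F_eq_ann_Fm (a lam : ℂ)
    (ρa : VecR →ₗ⁅ℂ⁆ Module.End ℂ (ℤ →₀ ℂ)) (hρa : IsFaRep a lam ρa)
    (ρm : VecR →ₗ⁅ℂ⁆ Module.End ℂ (ℕ →₀ ℂ)) (hρm : IsFmRep lam ρm) :
    LinearMap.ker (UniversalEnvelopingAlgebra.lift ℂ ρa).toLinearMap = AnnF lam ∧
    AnnF lam = LinearMap.ker (UniversalEnvelopingAlgebra.lift ℂ ρm).toLinearMap := by
  constructor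
  · apply Submodule.ext
    intro u
    rw [LinearMap.mem_ker, AlgHom.toLinearMap_apply]
    show _ ↔ u ∈ LinearMap.ker (piU lam).toLinearMap
    rw [LinearMap.mem_ker, AlgHom.toLinearMap_apply]
    exact (AnnPf.ker_faRep lam a ρa hρa u).trans (AnnPf.ker_piU_iff lam u).symm
  · apply Submodule.ext
    intro u
    show u ∈ LinearMap.ker (piU lam).toLinearMap ↔ _
    rw [LinearMap.mem_ker, AlgHom.toLinearMap_apply, LinearMap.mem_ker,
      AlgHom.toLinearMap_apply]
    exact (AnnPf.ker_piU_iff lam u).trans (AnnPf.ker_fmRep lam ρm hρm u).symm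
end

section
/- Set Z := (1/2)(e₁e₀ − e₂e₋₁ − e₁) in U(Vec ℝ). For every λ ∈ ℂ, π_λ(Z) is the operator of multiplication by q(λ)·x on ℂ[x]; that is, π_λ(Z)(g) = (λ² − λ)·x·g for all g ∈ ℂ[x]. -/
open Polynomial

attribute [local instance 100] LieRing.ofAssociativeRing

noncomputable section

/-- `Q = e₀² − e₀ − e₁e₋₁`, the Casimir element of the projective subalgebra. -/
def Qel : UVec := eU 0 ^ 2 - eU 0 - eU 1 * eU (-1)

/-- `Z = (1/2)(e₁e₀ − e₂e₋₁ − e₁)`. -/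
def Zel : UVec := (1 / 2 : ℂ) • (eU 1 * eU 0 - eU 2 * eU (-1) - eU 1)

/-- `Y = Q(e₀ − 1/2) − Ze₋₁`. -/
def Yel : UVec := Qel * (eU 0 - (1 / 2 : ℂ) • 1) - Zel * eU (-1)

/-- `Q^{e₂} = 3e₁² − 2e₂(2e₀ + 1) + e₃e₋₁`. -/
def Qe2 : UVec := 3 * eU 1 ^ 2 - 2 * eU 2 * (2 * eU 0 + 1) + eU 3 * eU (-1)

end

lemma piU_eU_apply (lam : ℂ) (n : ℤ) (g : Polynomial ℂ) :
    piU lam (eU n) g =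
      derivative g * X ^ (n + 1).toNat + lam • (derivative (X ^ (n + 1).toNat) * g) := by
  rw [piU, eU, UniversalEnvelopingAlgebra.lift_ι_apply]
  show (eVF n) g + lam • (derivative ((eVF n) X) * g) = _
  rw [vecR_apply]
  have hX : (eVF n) X = X ^ (n + 1).toNat := by rw [eVF, Polynomial.mkDerivation_X]
  rw [hX]

/-- For every `λ ∈ ℂ`, `π_λ(Z)` is multiplication by `q(λ)·x = (λ² − λ)·x` on `ℂ[x]`. -/
theorem piU_Zel (lam : ℂ) (g : Polynomial ℂ) :
    piU lam Zel g = (lam ^ 2 - lam) • (Polynomial.X * g) := by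
  rw [Zel, map_smul, map_sub, map_sub, map_mul, map_mul]
  simp only [LinearMap.smul_apply, LinearMap.sub_apply, Module.End.mul_apply,
    piU_eU_apply, smul_eq_C_mul,
    show ((1:ℤ) + 1).toNat = 2 from rfl, show ((2:ℤ) + 1).toNat = 3 from rfl,
    show ((0:ℤ) + 1).toNat = 1 from rfl, show ((-1:ℤ) + 1).toNat = 0 from rfl,
    derivative_X_pow, pow_one, pow_zero, derivative_one, derivative_X,
    derivative_mul, derivative_add, derivative_C_mul, map_add, Nat.cast_ofNat,
    map_ofNat, mul_zero, zero_mul, add_zero, mul_one, one_mul]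
  simp only [derivative_C, zero_mul, zero_add]
  norm_num
  have h : (C (1/2 : ℂ) : ℂ[X]) * 2 = 1 := by
    rw [(map_ofNat C 2).symm, ← C_mul]
    norm_num
  linear_combination (X * C lam ^ 2 * g - X * C lam * g) * h
end

section
/- Set Q := e₀² − e₀ − e₁e₋₁, Z := (1/2)(e₁e₀ − e₂e₋₁ − e₁), and Y := Q(e₀ − 1/2) − Ze₋₁ in U(Vec ℝ). For every λ ∈ ℂ, Y acts on ℱ_λ by the scalar y(λ) := (λ − 1/2)(λ² − λ); that is, π_λ(Y) = (λ − 1/2)(λ² − λ)·id on ℂ[x]. -/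
open Polynomial

attribute [local instance 100] LieRing.ofAssociativeRing

lemma pem1 (lam : ℂ) (g : Polynomial ℂ) : piU lam (eU (-1)) g = derivative g := by
  rw [piU_eU_apply]; norm_num

lemma pe0 (lam : ℂ) (g : Polynomial ℂ) :
    piU lam (eU 0) g = derivative g * X + lam • g := by
  rw [piU_eU_apply]; norm_num

lemma pe1 (lam : ℂ) (g : Polynomial ℂ) :
    piU lam (eU 1) g = derivative g * X ^ 2 + (2 * lam) • (X * g) := by
  rw [piU_eU_apply]
  norm_num [Int.toNat_natCast, derivative_X_pow, smul_eq_C_mul, map_ofNat]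
  push_cast
  ring

lemma pe2 (lam : ℂ) (g : Polynomial ℂ) :
    piU lam (eU 2) g = derivative g * X ^ 3 + (3 * lam) • (X ^ 2 * g) := by
  rw [piU_eU_apply]
  norm_num [Int.toNat_natCast, derivative_X_pow, smul_eq_C_mul, map_ofNat]
  push_cast
  ring


/-- For every `λ ∈ ℂ`, `Y` acts on `ℱ_λ` by the scalar `y(λ) = (λ − 1/2)(λ² − λ)`. -/
theorem piU_Yel (lam : ℂ) :
    piU lam Yel = ((lam - 1 / 2) * (lam ^ 2 - lam)) • (1 : Module.End ℂ (Polynomial ℂ)) := by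
  refine LinearMap.ext fun g => ?_
  simp only [Yel, Qel, Zel, map_sub, map_mul, map_pow, map_one, map_smul,
    LinearMap.sub_apply, LinearMap.smul_apply, Module.End.one_apply, Module.End.mul_apply,
    pow_two, pem1, pe0, pe1, pe2, smul_eq_C_mul]
  simp only [derivative_mul, derivative_add, derivative_X, derivative_C_mul, derivative_C,
    derivative_X_pow, map_sub, map_mul, map_pow, map_one, map_ofNat]
  have h2 : (2 : Polynomial ℂ) * C (1 / 2 : ℂ) = 1 := by
    rw [← map_ofNat (C : ℂ →+* Polynomial ℂ) 2, ← map_mul]; norm_num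
  linear_combination (X * derivative g * C lam - X * derivative g * C lam ^ 2) * h2
end
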